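/- For every a > 1 there exist w ≥ 2, ε₀ ∈ (0,1), s ∈ (0,1) and R₀ ∈ ℕ such that for all R ≥ R₀ the function f : ℤ → [0,∞), f(x) = min{(ε₀ + x/⌈wR⌉)·1_{x≥0}, 1}, satisfies: (i) f(x) = 0 for x < 0, f(0) = ε₀, f(x) = 1 for x ≥ ⌈wR⌉; and (ii) a·δ_R(x;f) ≥ f(x + ⌈sR⌉) for all x ∈ ℤ. -/
import Mathlib


private lemma sum_Icc_cast (a : ℤ) (n : ℕ) :
    ∑ y ∈ Finset.Icc a (a + (n:ℤ)), (y:ℝ) = (n+1)*a + n*(n+1)/2 := by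
  induction n with
  | zero => simp
  | succ k ih =>
    have hins : Finset.Icc a (a + ((k+1:ℕ):ℤ)) =
        insert (a + ((k+1:ℕ):ℤ)) (Finset.Icc a (a + (k:ℤ))) := by
      ext y; simp only [Finset.mem_Icc, Finset.mem_insert]; push_cast; omega
    have hnm : (a + ((k+1:ℕ):ℤ)) ∉ Finset.Icc a (a + (k:ℤ)) := by
      simp only [Finset.mem_Icc]; push_cast; omega
    rw [hins, Finset.sum_insert hnm, ih]
    push_cast; ring

private lemma sum_affine (lo : ℤ) (n : ℕ) (c d : ℝ) :
    ∑ y ∈ Finset.Icc lo (lo + (n:ℤ)), (c + d * (y:ℝ))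
      = (n+1)*c + d*((n+1)*lo + n*(n+1)/2) := by
  have hc : (Finset.Icc lo (lo + (n:ℤ))).card = n + 1 := by
    rw [Int.card_Icc]; omega
  rw [Finset.sum_add_distrib, Finset.sum_const, hc, nsmul_eq_mul, ← Finset.mul_sum,
    sum_Icc_cast]
  push_cast; ring

-- lower bounds for the wave shape, pure real arithmetic
private lemma wave_lb0 (ε Wr y : ℝ) (hε0 : 0 ≤ ε) (hW0 : 0 < Wr)
    (hyW : y ≤ Wr) : 1/Wr * y ≤ min ((ε + y/Wr) * 1) 1 := by
  rw [mul_one]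
  refine le_min (by rw [one_div, inv_mul_eq_div]; linarith) ?_
  rw [one_div, inv_mul_eq_div, div_le_one hW0]; linarith

private lemma wave_lb1 (ε Wr y : ℝ) (hε0 : 0 ≤ ε) (hε1 : ε ≤ 1) (hW0 : 0 < Wr)
    (hy0 : 0 ≤ y) (hyW : y ≤ Wr) : ε + (1-ε)/Wr * y ≤ min ((ε + y/Wr) * 1) 1 := by
  rw [mul_one]
  have h1 : (1-ε)/Wr * y ≤ y / Wr := by
    rw [div_mul_eq_mul_div, div_le_div_iff₀ hW0 hW0]
    nlinarith [mul_nonneg (mul_nonneg hε0 hy0) hW0.le]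
  have h2 : (1-ε)/Wr * y ≤ 1 - ε := by
    rw [div_mul_eq_mul_div, div_le_iff₀ hW0]; nlinarith
  exact le_min (by linarith) (by linarith)

private lemma wave_lb2 (ε Wr Rr y : ℝ) (hε0 : 0 ≤ ε) (hW0 : 0 < Wr) (hR0 : 0 ≤ Rr)
    (hyW : Wr - 2*Rr ≤ y) : (Wr - 2*Rr)/Wr ≤ min ((ε + y/Wr) * 1) 1 := by
  rw [mul_one]
  refine le_min ?_ ?_
  · have h : (Wr - 2*Rr)/Wr ≤ y/Wr := by gcongr
    linarith
  · rw [div_le_one hW0]; linarith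

-- case 2 arithmetic
private lemma arith2 (a' β Rr Wr : ℝ) (ha1 : 1 < a') (hab : a' * β = a' - 1)
    (hβ0 : 0 < β) (hR1 : 1 ≤ Rr) (hβW : 4*Rr ≤ β*Wr) :
    Wr ≤ a' * (Wr - 2*Rr) := by
  nlinarith

-- case 3a arithmetic
private lemma arith3a (a' β ε Rr Sr X Wr : ℝ) (ha1 : 1 < a') (ha2 : a' ≤ 3/2)
    (hab : a' * β = a' - 1) (hβ0 : 0 < β) (hβ3 : β ≤ 1/3) (hε : ε = β^2/16)
    (hβR : 8 ≤ β*Rr) (hS : Sr ≤ β/4*Rr + 1) (hRX : Rr ≤ X) (hXW : X + Rr ≤ Wr) :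
    ε*Wr + X + Sr ≤ a' * (ε*Wr + (1-ε)*X) := by
  have hR0 : 0 < Rr := by nlinarith
  have hX0 : 0 ≤ X := by linarith
  have hWX : X ≤ Wr := by linarith
  have h1 : 0 ≤ ε * (a'-1) * (Wr - X) := by
    have hεnn : 0 ≤ ε := by rw [hε]; positivity
    exact mul_nonneg (mul_nonneg hεnn (by linarith)) (by linarith)
  have h2 : β * Rr ≤ β * X := by nlinarith
  have h3 : β * X ≤ (a'-1) * X := by nlinarith
  have h4 : ε * X ≤ β/48 * X := by
    rw [hε]; nlinarith
  nlinarith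

-- case 3b arithmetic
private lemma arith3b (a' β ε Rr Sr N Wr : ℝ) (ha1 : 1 < a') (ha2 : a' ≤ 3/2)
    (hab : a' * β = a' - 1) (hβ0 : 0 < β) (hR1 : 1 ≤ Rr)
    (hεW : ε*Wr + Sr ≤ β*Rr - 1) (hN0 : 0 ≤ N) :
    (ε*Wr + (N - Rr) + Sr) * (2*Rr+1) ≤ a' * (N*(N+1)/2) := by
  have ha0 : (0:ℝ) < a' := by linarith
  have hb : (2*Rr + 1 - a'/2)^2 ≤ 2*a'*(2*Rr+1)*(Rr - ε*Wr - Sr) := by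
    have h1 : Rr - β*Rr + 1 ≤ Rr - ε*Wr - Sr := by linarith
    have h2 : 2*a'*(2*Rr+1)*(Rr - β*Rr + 1) = (2*Rr+1)*(2*Rr + 2*a') := by
      linear_combination (-(2*Rr+1)*2*Rr) * hab
    nlinarith [mul_le_mul_of_nonneg_left h1 (by positivity : (0:ℝ) ≤ 2*a'*(2*Rr+1))]
  nlinarith [sq_nonneg (a'*N + a'/2 - (2*Rr+1)), hb]


/-- One-dimensional window average: `δ_R(x;f) = (2R+1)^{-1} Σ_{y=x−R}^{x+R} f(y)`. -/
noncomputable def dens1 (R : ℕ) (f : ℤ → ℝ) (x : ℤ) : ℝ :=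
  (2 * R + 1 : ℝ)⁻¹ * ∑ y ∈ Finset.Icc (x - (R : ℤ)) (x + (R : ℤ)), f y

set_option maxHeartbeats 2000000 in
/-- For every `a > 1` there exist `w ≥ 2`, `ε₀ ∈ (0,1)`, `s ∈ (0,1)` and `R₀` such that
for all `R ≥ R₀` the function `f(x) = min{(ε₀ + x/⌈wR⌉)·1_{x≥0}, 1}` is a linear
travelling wave shape: `f(x) = 0` for `x < 0`, `f(0) = ε₀`, `f(x) = 1` for `x ≥ ⌈wR⌉`,
and `a·δ_R(x;f) ≥ f(x + ⌈sR⌉)` for all `x ∈ ℤ`. -/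
theorem stmt13 (a : ℝ) (ha : 1 < a) :
    ∃ w : ℝ, 2 ≤ w ∧ ∃ ε₀ ∈ Set.Ioo (0 : ℝ) 1, ∃ s ∈ Set.Ioo (0 : ℝ) 1, ∃ R₀ : ℕ,
      ∀ R : ℕ, R₀ ≤ R → ∀ f : ℤ → ℝ,
        (f = fun x : ℤ =>
          min ((ε₀ + (x : ℝ) / (⌈w * (R : ℝ)⌉₊ : ℝ)) * (if 0 ≤ x then 1 else 0)) 1) →
        (∀ x : ℤ, x < 0 → f x = 0) ∧ f 0 = ε₀ ∧
        (∀ x : ℤ, (⌈w * (R : ℝ)⌉₊ : ℤ) ≤ x → f x = 1) ∧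
        (∀ x : ℤ, f (x + (⌈s * (R : ℝ)⌉₊ : ℤ)) ≤ a * dens1 R f x) := by
  set a' : ℝ := min a (3/2) with ha'def
  have ha1 : 1 < a' := lt_min ha (by norm_num)
  have ha2 : a' ≤ 3/2 := min_le_right _ _
  have haa : a' ≤ a := min_le_left _ _
  have ha0 : (0:ℝ) < a' := by linarith
  clear_value a'
  set β : ℝ := (a' - 1) / a' with hβdef
  have hab : a' * β = a' - 1 := by rw [hβdef]; field_simp
  have hβ0 : 0 < β := div_pos (by linarith) ha0
  have hβ3 : β ≤ 1/3 := by rw [hβdef, div_le_iff₀ ha0]; linarith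
  clear_value β
  refine ⟨4/β, ?_, β^2/16, ⟨by positivity, by nlinarith⟩, β/4,
    ⟨by positivity, by nlinarith⟩, ⌈(8:ℝ)/β⌉₊, ?_⟩
  · rw [le_div_iff₀ hβ0]; linarith
  intro R hR f hf
  set W : ℕ := ⌈4/β * (R:ℝ)⌉₊ with hWdef
  set S : ℕ := ⌈β/4 * (R:ℝ)⌉₊ with hSdef
  set ε : ℝ := β^2/16 with hεdef
  have hε0 : (0:ℝ) < ε := by rw [hεdef]; positivity
  have hε1 : ε ≤ 1 := by rw [hεdef]; nlinarith
  have hRr : (8:ℝ)/β ≤ R := le_trans (Nat.le_ceil _) (by exact_mod_cast hR)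
  have hβR : 8 ≤ β * (R:ℝ) := by rw [div_le_iff₀ hβ0] at hRr; linarith
  have hR1 : (1:ℝ) ≤ R := by nlinarith
  have hWlb : 4/β * (R:ℝ) ≤ W := Nat.le_ceil _
  have hWub : (W:ℝ) ≤ 4/β * R + 1 := (Nat.ceil_lt_add_one (by positivity)).le
  have hSub : (S:ℝ) ≤ β/4 * R + 1 := (Nat.ceil_lt_add_one (by positivity)).le
  have hSR : (S:ℤ) ≤ (R:ℤ) := by
    have : S ≤ R := Nat.ceil_le.mpr (by nlinarith)
    exact_mod_cast this
  clear_value W S ε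
  have hβW : 4*(R:ℝ) ≤ β * W := by
    rw [div_mul_eq_mul_div, div_le_iff₀ hβ0] at hWlb; nlinarith
  have hW12 : 12 * (R:ℝ) ≤ W := by nlinarith
  have hW0 : (0:ℝ) < W := by linarith
  have hW0' : 0 < W := by exact_mod_cast hW0
  have hSnn : (0:ℝ) ≤ S := Nat.cast_nonneg S
  have hεW : ε * (W:ℝ) + S ≤ β * R - 1 := by
    have hq : β^2 ≤ 1/9 := by nlinarith [mul_le_mul hβ3 hβ3 hβ0.le (by norm_num : (0:ℝ) ≤ 1/3)]
    have h5 : β*(W:ℝ) ≤ 4*R + β := by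
      have h6 : β*(4/β*(R:ℝ)+1) = 4*R + β := by field_simp
      nlinarith
    rw [hεdef]
    nlinarith [mul_le_mul_of_nonneg_left h5 (by positivity : (0:ℝ) ≤ β/16)]
  -- pointwise description of f
  have hfx : ∀ y : ℤ, f y
      = min ((ε + (y:ℝ) / (W:ℝ)) * (if 0 ≤ y then 1 else 0)) 1 := fun y => by rw [hf]
  have hfzero : ∀ y : ℤ, y < 0 → f y = 0 := by
    intro y hy
    rw [hfx y, if_neg (not_le.mpr hy)]
    norm_num
  have hfnn : ∀ y : ℤ, 0 ≤ f y := by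
    intro y
    rcases lt_or_ge y 0 with hy | hy
    · rw [hfzero y hy]
    · rw [hfx y, if_pos hy, mul_one]
      have : (0:ℝ) ≤ (y:ℝ)/W := div_nonneg (by exact_mod_cast hy) hW0.le
      exact le_min (by linarith) one_pos.le
  have hfle1 : ∀ y : ℤ, f y ≤ 1 := fun y => by rw [hfx y]; exact min_le_right _ _
  have hfub : ∀ y : ℤ, 0 ≤ y → f y ≤ ε + (y:ℝ)/W := by
    intro y hy
    rw [hfx y, if_pos hy, mul_one]
    exact min_le_left _ _
  refine ⟨hfzero, ?_, ?_, ?_⟩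
  · rw [hfx 0]
    norm_num
    exact hε1
  · intro x hx
    have hx0 : (0:ℤ) ≤ x := le_trans (by exact_mod_cast hW0'.le) hx
    have hx' : (W:ℝ) ≤ (x:ℝ) := by exact_mod_cast hx
    rw [hfx x, if_pos hx0, mul_one]
    refine min_eq_right ?_
    have : (1:ℝ) ≤ (x:ℝ)/W := (one_le_div hW0).mpr hx'
    linarith
  intro x
  have h21 : (0:ℝ) < 2*(R:ℝ)+1 := by positivity
  rw [dens1]
  set Ssum : ℝ := ∑ y ∈ Finset.Icc (x - (R:ℤ)) (x + (R:ℤ)), f y with hSsumdef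
  have hSnn2 : 0 ≤ Ssum := Finset.sum_nonneg fun y _ => hfnn y
  have haS2 : a' * Ssum ≤ a * Ssum := mul_le_mul_of_nonneg_right haa hSnn2
  rw [show ((2 * (R:ℕ) : ℝ) + 1)⁻¹ = (2*(R:ℝ)+1)⁻¹ by norm_num,
    show a * ((2*(R:ℝ)+1)⁻¹ * Ssum) = (a * Ssum) / (2*(R:ℝ)+1) by field_simp; try ring; try tauto,
    le_div_iff₀ h21]
  -- goal : f (x + S) * (2*R+1) ≤ a * Ssum
  rcases lt_or_ge (x + (S:ℤ)) 0 with hc1 | hxS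
  · rw [hfzero _ hc1, zero_mul]
    exact mul_nonneg (by linarith) hSnn2
  have hxS' : (0:ℝ) ≤ (x:ℝ) + S := by exact_mod_cast hxS
  rcases lt_or_ge (W:ℤ) (x + R) with hc2 | hxR
  · -- case 2 : saturated window
    have hcard : (Finset.Icc (x - (R:ℤ)) (x + (R:ℤ))).card = 2*R+1 := by
      rw [Int.card_Icc]; omega
    have hterm : ∀ y ∈ Finset.Icc (x - (R:ℤ)) (x + (R:ℤ)),
        ((W:ℝ) - 2*R)/W ≤ f y := by
      intro y hy
      rw [Finset.mem_Icc] at hy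
      have hW2R : 2*(R:ℤ) < (W:ℤ) := by exact_mod_cast (by nlinarith : 2*(R:ℝ) < W)
      have hy0 : 0 ≤ y := by omega
      have hyW : ((W:ℝ) - 2*R) ≤ (y:ℝ) := by
        have : (W:ℤ) - 2*R ≤ y := by omega
        exact_mod_cast this
      rw [hfx y, if_pos hy0]
      exact wave_lb2 ε W R y hε0.le hW0 (by positivity) hyW
    have hsum : (2*(R:ℝ)+1) * (((W:ℝ)-2*R)/W) ≤ Ssum := by
      have h := Finset.card_nsmul_le_sum _ _ _ hterm
      rw [hcard] at h
      calc (2*(R:ℝ)+1) * (((W:ℝ)-2*R)/W) = ((2*R+1 : ℕ):ℝ) * (((W:ℝ)-2*R)/W) := by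
            push_cast; ring
        _ ≤ _ := by simpa [nsmul_eq_mul] using h
    have hkey : (2*(R:ℝ)+1) ≤ a' * ((2*(R:ℝ)+1) * (((W:ℝ)-2*R)/W)) := by
      rw [show a' * ((2*(R:ℝ)+1) * (((W:ℝ)-2*R)/W))
            = (a' * ((2*(R:ℝ)+1) * ((W:ℝ)-2*R)))/W by ring, le_div_iff₀ hW0]
      nlinarith [arith2 a' β R W ha1 hab hβ0 hR1 hβW]
    calc f (x + (S:ℤ)) * (2*(R:ℝ)+1) ≤ 1 * (2*(R:ℝ)+1) :=
          mul_le_mul_of_nonneg_right (hfle1 _) h21.le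
      _ = 2*(R:ℝ)+1 := one_mul _
      _ ≤ a' * ((2*(R:ℝ)+1) * (((W:ℝ)-2*R)/W)) := hkey
      _ ≤ a' * Ssum := mul_le_mul_of_nonneg_left hsum ha0.le
      _ ≤ a * Ssum := haS2
  · -- window right end inside the ramp
    have hfup : f (x + (S:ℤ)) ≤ ε + ((x:ℝ) + S)/W := by
      have h := hfub (x + (S:ℤ)) hxS
      rw [show (((x + (S:ℤ)):ℤ):ℝ) = (x:ℝ) + S by push_cast; ring] at h
      exact h
    rcases le_or_gt (R:ℤ) x with hc3 | hc3
    · -- case 3a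
      have hX0 : (0:ℝ) ≤ (x:ℝ) := by
        have : (0:ℤ) ≤ x := le_trans (by positivity) hc3
        exact_mod_cast this
      have hRX : (R:ℝ) ≤ (x:ℝ) := by exact_mod_cast hc3
      have hXW : (x:ℝ) + R ≤ W := by exact_mod_cast hxR
      have hterm : ∀ y ∈ Finset.Icc (x - (R:ℤ)) (x + (R:ℤ)),
          ε + (1-ε)/(W:ℝ) * y ≤ f y := by
        intro y hy
        rw [Finset.mem_Icc] at hy
        have hy0 : 0 ≤ y := by omega
        have hy0' : (0:ℝ) ≤ (y:ℝ) := by exact_mod_cast hy0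
        have hyW : (y:ℝ) ≤ (W:ℝ) := by
          have : y ≤ (W:ℤ) := by omega
          exact_mod_cast this
        rw [hfx y, if_pos hy0]
        exact wave_lb1 ε W y hε0.le hε1 hW0 hy0' hyW
      have hA : Finset.Icc (x - (R:ℤ)) (x + (R:ℤ))
          = Finset.Icc (x - (R:ℤ)) ((x - (R:ℤ)) + ((2*R:ℕ):ℤ)) := by
        congr 1; push_cast; ring
      have hcomp : ∑ y ∈ Finset.Icc (x - (R:ℤ)) (x + (R:ℤ)), (ε + (1-ε)/(W:ℝ) * y)
          = (2*(R:ℝ)+1)*ε + (1-ε)/W*((2*(R:ℝ)+1)*x) := by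
        rw [hA, sum_affine]; push_cast; ring
      have hsum : (2*(R:ℝ)+1)*ε + (1-ε)/W*((2*(R:ℝ)+1)*x) ≤ Ssum := by
        rw [← hcomp]; exact Finset.sum_le_sum hterm
      have harith := arith3a a' β ε R S x W ha1 ha2 hab hβ0 hβ3 hεdef hβR hSub hRX hXW
      have hkey : (ε + ((x:ℝ) + S)/W) * (2*(R:ℝ)+1)
          ≤ a' * ((2*(R:ℝ)+1)*ε + (1-ε)/W*((2*(R:ℝ)+1)*x)) := by
        rw [show (ε + ((x:ℝ) + S)/W) * (2*(R:ℝ)+1)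
              = ((ε*W + ((x:ℝ)+S)) * (2*(R:ℝ)+1))/W by field_simp; try ring; try tauto,
          show a' * ((2*(R:ℝ)+1)*ε + (1-ε)/W*((2*(R:ℝ)+1)*x))
              = (a' * ((2*(R:ℝ)+1)*(ε*W) + (1-ε)*((2*(R:ℝ)+1)*x)))/W by
            field_simp; try ring; try tauto,
          div_le_div_iff₀ hW0 hW0]
        nlinarith [mul_le_mul_of_nonneg_right
          (mul_le_mul_of_nonneg_right harith (by linarith : (0:ℝ) ≤ 2*(R:ℝ)+1)) hW0.le]
      calc f (x + (S:ℤ)) * (2*(R:ℝ)+1) ≤ (ε + ((x:ℝ) + S)/W) * (2*(R:ℝ)+1) :=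
            mul_le_mul_of_nonneg_right hfup h21.le
        _ ≤ a' * ((2*(R:ℝ)+1)*ε + (1-ε)/W*((2*(R:ℝ)+1)*x)) := hkey
        _ ≤ a' * Ssum := mul_le_mul_of_nonneg_left hsum ha0.le
        _ ≤ a * Ssum := haS2
    · -- case 3b
      have hm0 : (0:ℤ) ≤ x + R := by omega
      set n : ℕ := (x + (R:ℤ)).toNat with hndef
      have hn : (n:ℤ) = x + R := Int.toNat_of_nonneg hm0
      have hnR : (n:ℝ) = (x:ℝ) + R := by exact_mod_cast hn
      have hsubset : Finset.Icc (0:ℤ) (x + R) ⊆ Finset.Icc (x - (R:ℤ)) (x + R) :=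
        Finset.Icc_subset_Icc (by omega) le_rfl
      have hterm : ∀ y ∈ Finset.Icc (0:ℤ) (x + (R:ℤ)),
          (0:ℝ) + 1/(W:ℝ) * y ≤ f y := by
        intro y hy
        rw [Finset.mem_Icc] at hy
        have hyW : (y:ℝ) ≤ (W:ℝ) := by
          have : y ≤ (W:ℤ) := by omega
          exact_mod_cast this
        rw [hfx y, if_pos hy.1, zero_add]
        exact wave_lb0 ε W y hε0.le hW0 hyW
      have hB : Finset.Icc (0:ℤ) (x + (R:ℤ))
          = Finset.Icc (0:ℤ) ((0:ℤ) + (n:ℤ)) := by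
        congr 1; omega
      have hcomp : ∑ y ∈ Finset.Icc (0:ℤ) (x + (R:ℤ)), ((0:ℝ) + 1/(W:ℝ) * y)
          = 1/W*((n:ℝ)*((n:ℝ)+1)/2) := by
        rw [hB, sum_affine]; push_cast; ring
      have hsum : 1/(W:ℝ)*((n:ℝ)*((n:ℝ)+1)/2) ≤ Ssum := by
        rw [← hcomp]
        exact le_trans (Finset.sum_le_sum hterm)
          (Finset.sum_le_sum_of_subset_of_nonneg hsubset (fun y _ _ => hfnn y))
      have harith := arith3b a' β ε R S ((x:ℝ) + R) W ha1 ha2 hab hβ0 hR1 hεW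
        (by linarith [hxS', hSR, hSnn] :
          (0:ℝ) ≤ (x:ℝ) + R)
      have hkey : (ε + ((x:ℝ) + S)/W) * (2*(R:ℝ)+1)
          ≤ a' * (1/(W:ℝ)*((n:ℝ)*((n:ℝ)+1)/2)) := by
        rw [show (ε + ((x:ℝ) + S)/W) * (2*(R:ℝ)+1)
              = ((ε*W + ((x:ℝ)+S)) * (2*(R:ℝ)+1))/W by field_simp; try ring; try tauto,
          show a' * (1/(W:ℝ)*((n:ℝ)*((n:ℝ)+1)/2))
              = (a' * ((n:ℝ)*((n:ℝ)+1)/2))/W by field_simp; try ring; try tauto,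
          div_le_div_iff₀ hW0 hW0, hnR]
        have h := mul_le_mul_of_nonneg_right harith hW0.le
        nlinarith [h]
      calc f (x + (S:ℤ)) * (2*(R:ℝ)+1) ≤ (ε + ((x:ℝ) + S)/W) * (2*(R:ℝ)+1) :=
            mul_le_mul_of_nonneg_right hfup h21.le
        _ ≤ a' * (1/(W:ℝ)*((n:ℝ)*((n:ℝ)+1)/2)) := hkey
        _ ≤ a' * Ssum := mul_le_mul_of_nonneg_left hsum ha0.le
        _ ≤ a * Ssum := haS2
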